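/- Let Y, D, W, ε ∈ ℝ^n, Z ∈ ℝ^{n×p}, A ⊆ {1,…,p}, α_A ∈ ℝ^{|A|}, β, γ ∈ ℝ satisfy Y = Dβ + Z_A α_A + Wγ + ε, where Z_A is the submatrix of Z consisting of the columns indexed by A. Set M = [Z D] with linearly independent columns, Ŵ = P_M W, and N̂_A = [Z_A Ŵ]; assume N̂_A has linearly independent columns and D^⊺ P_{N̂_A^⊥} D ≠ 0. Then: (i) P_{N̂_A^⊥} Z_A = 0; (ii) D^⊺ P_{N̂_A^⊥} W = 0; and consequently (iii) the oracle estimator β̂_or := (D^⊺ P_{N̂_A^⊥} Y)/(D^⊺ P_{N̂_A^⊥} D) satisfies β̂_or = β + (D^⊺ P_{N̂_A^⊥} ε)/(D^⊺ P_{N̂_A^⊥} D). -/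

import Mathlib

open Matrix

/-- Orthogonal projection matrix onto the column space of `B`:  `P_B = B (Bᵀ B)⁻¹ Bᵀ`. -/
noncomputable def proj {n : ℕ} {ι : Type*} [Fintype ι] [DecidableEq ι]
    (B : Matrix (Fin n) ι ℝ) : Matrix (Fin n) (Fin n) ℝ :=
  B * (B.transpose * B)⁻¹ * B.transpose

/-- Orthogonal projection onto the span of a single vector `w`: `P_w = w wᵀ / (wᵀ w)`. -/
noncomputable def projVec {n : ℕ} (w : Fin n → ℝ) : Matrix (Fin n) (Fin n) ℝ :=
  (w ⬝ᵥ w)⁻¹ • Matrix.vecMulVec w w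

/-- Residual projection matrix `P_{B⊥} = I - P_B`. -/
noncomputable def projPerp {n : ℕ} {ι : Type*} [Fintype ι] [DecidableEq ι]
    (B : Matrix (Fin n) ι ℝ) : Matrix (Fin n) (Fin n) ℝ :=
  1 - proj B

/-- Residual projection onto the orthocomplement of a single vector `w`. -/
noncomputable def projVecPerp {n : ℕ} (w : Fin n → ℝ) : Matrix (Fin n) (Fin n) ℝ :=
  1 - projVec w

section Aux

variable {n : ℕ} {ι : Type*} [Fintype ι] [DecidableEq ι]

lemma gram_posDef {B : Matrix (Fin n) ι ℝ} (h : LinearIndependent ℝ B.transpose) :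
    (B.transpose * B).PosDef := by
  refine posDef_iff_dotProduct_mulVec.mpr ⟨by simpa using isHermitian_conjTranspose_mul_self B, fun x hx => ?_⟩
  have hmv : B *ᵥ x ≠ 0 := by
    intro h0
    apply hx
    funext i
    refine Fintype.linearIndependent_iff.mp h x ?_ i
    funext k
    have := congrFun h0 k
    simpa [Matrix.mulVec, dotProduct, Finset.sum_apply, mul_comm] using this
  have key : dotProduct (star x) ((B.transpose * B) *ᵥ x) = (B *ᵥ x) ⬝ᵥ (B *ᵥ x) := by
    rw [← mulVec_mulVec, dotProduct_mulVec, star_trivial, vecMul_transpose]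
  rw [key]
  have hnn : 0 ≤ (B *ᵥ x) ⬝ᵥ (B *ᵥ x) :=
    Finset.sum_nonneg fun i _ => mul_self_nonneg _
  exact lt_of_le_of_ne hnn (Ne.symm (fun he => hmv (dotProduct_self_eq_zero.mp he)))

lemma gram_isUnit_det {B : Matrix (Fin n) ι ℝ} (h : LinearIndependent ℝ B.transpose) :
    IsUnit (B.transpose * B).det :=
  (gram_posDef h).det_pos.ne'.isUnit

lemma proj_mul_self {B : Matrix (Fin n) ι ℝ} (h : LinearIndependent ℝ B.transpose) :
    proj B * B = B := by
  unfold proj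
  rw [Matrix.mul_assoc, Matrix.mul_assoc,
    Matrix.nonsing_inv_mul _ (gram_isUnit_det h), Matrix.mul_one]

lemma proj_symm (B : Matrix (Fin n) ι ℝ) : (proj B)ᵀ = proj B := by
  unfold proj
  rw [Matrix.transpose_mul, Matrix.transpose_mul, Matrix.transpose_transpose,
    Matrix.transpose_nonsing_inv, Matrix.transpose_mul, Matrix.transpose_transpose,
    Matrix.mul_assoc]

lemma proj_idem {B : Matrix (Fin n) ι ℝ} (h : LinearIndependent ℝ B.transpose) :
    proj B * proj B = proj B := by
  have h1 := proj_mul_self h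
  calc proj B * proj B = (proj B * B) * ((B.transpose * B)⁻¹ * B.transpose) := by
        simp [proj, Matrix.mul_assoc]
    _ = proj B := by rw [h1]; simp [proj, Matrix.mul_assoc]

lemma projPerp_mul_self {B : Matrix (Fin n) ι ℝ} (h : LinearIndependent ℝ B.transpose) :
    projPerp B * B = 0 := by
  rw [projPerp, Matrix.sub_mul, Matrix.one_mul, proj_mul_self h, sub_self]

lemma projPerp_symm (B : Matrix (Fin n) ι ℝ) : (projPerp B)ᵀ = projPerp B := by
  rw [projPerp, Matrix.transpose_sub, Matrix.transpose_one, proj_symm]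

lemma dot_symm {P : Matrix (Fin n) (Fin n) ℝ} (h : Pᵀ = P) (u v : Fin n → ℝ) :
    u ⬝ᵥ (P *ᵥ v) = (P *ᵥ u) ⬝ᵥ v := by
  rw [dotProduct_mulVec, ← vecMul_transpose, h]

end Aux

/-- **Decomposition of the oracle estimator.**
In the model `Y = Dβ + Z_A α_A + Wγ + ε`, where `Z_A` consists of the columns of `Z`
indexed by the set `A` of invalid proxies, with `M = [Z D]` of full column rank,
`Ŵ = P_M W`, and `N̂_A = [Z_A Ŵ]` of full column rank with `Dᵀ P_{N̂_A⊥} D ≠ 0`: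
(i) `P_{N̂_A⊥} Z_A = 0`; (ii) `Dᵀ P_{N̂_A⊥} W = 0`; and consequently (iii) the oracle
estimator `β̂_or = (Dᵀ P_{N̂_A⊥} Y)/(Dᵀ P_{N̂_A⊥} D)` equals
`β + (Dᵀ P_{N̂_A⊥} ε)/(Dᵀ P_{N̂_A⊥} D)`. -/
theorem oracle_estimator_decomposition
    {n p : ℕ} (Y D W ε : Fin n → ℝ) (Z : Matrix (Fin n) (Fin p) ℝ)
    (A : Finset (Fin p)) (αA : {j // j ∈ A} → ℝ) (β γ : ℝ)
    (ZA : Matrix (Fin n) {j // j ∈ A} ℝ)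
    (hZA : ZA = Z.submatrix id Subtype.val)
    (hmodel : Y = β • D + ZA *ᵥ αA + γ • W + ε)
    (M : Matrix (Fin n) (Fin (p + 1)) ℝ)
    (hM : M = Matrix.of fun i j => Fin.lastCases (D i) (fun k => Z i k) j)
    (hMrank : LinearIndependent ℝ M.transpose)
    (What : Fin n → ℝ) (hWhat : What = proj M *ᵥ W)
    (NA : Matrix (Fin n) ({j // j ∈ A} ⊕ Unit) ℝ)
    (hNA : NA = Matrix.of fun i j => Sum.elim (fun a => ZA i a) (fun _ => What i) j)
    (hNArank : LinearIndependent ℝ NA.transpose)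
    (hden : D ⬝ᵥ (projPerp NA *ᵥ D) ≠ 0) :
    projPerp NA * ZA = 0 ∧
      D ⬝ᵥ (projPerp NA *ᵥ W) = 0 ∧
      (D ⬝ᵥ (projPerp NA *ᵥ Y)) / (D ⬝ᵥ (projPerp NA *ᵥ D)) =
        β + (D ⬝ᵥ (projPerp NA *ᵥ ε)) / (D ⬝ᵥ (projPerp NA *ᵥ D)) := by
  have h0 : projPerp NA * NA = 0 := projPerp_mul_self hNArank
  -- (i)
  have hi : projPerp NA * ZA = 0 := by
    ext i a
    have := congrFun (congrFun h0 i) (Sum.inl a)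
    simpa [Matrix.mul_apply, hNA] using this
  -- projPerp NA kills What
  have hWhat0 : projPerp NA *ᵥ What = 0 := by
    funext i
    have := congrFun (congrFun h0 i) (Sum.inr ())
    simpa [Matrix.mul_apply, Matrix.mulVec, dotProduct, hNA] using this
  -- proj M fixes D
  have hPMM : proj M * M = M := proj_mul_self hMrank
  have hPMD : proj M *ᵥ D = D := by
    funext i
    have := congrFun (congrFun hPMM i) (Fin.last p)
    rw [Matrix.mul_apply] at this
    simpa [Matrix.mulVec, dotProduct, hM] using this
  -- proj M fixes NA
  have hPMNA : proj M * NA = NA := by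
    ext i j
    rw [Matrix.mul_apply]
    cases j with
    | inl a =>
      have := congrFun (congrFun hPMM i) (Fin.castSucc a.val)
      rw [Matrix.mul_apply] at this
      simpa [hNA, hZA, hM] using this
    | inr u =>
      have hfix : proj M *ᵥ What = What := by
        rw [hWhat, mulVec_mulVec, proj_idem hMrank]
      have h2 := congrFun hfix i
      simpa [hNA, Matrix.mulVec, dotProduct] using h2
  have hPNA : proj M * proj NA = proj NA := by
    calc proj M * proj NA
        = (proj M * NA) * ((NA.transpose * NA)⁻¹ * NA.transpose) := by
          simp [proj, Matrix.mul_assoc]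
      _ = proj NA := by rw [hPMNA]; simp [proj, Matrix.mul_assoc]
  have hclaim : proj M *ᵥ (projPerp NA *ᵥ D) = projPerp NA *ᵥ D := by
    rw [mulVec_mulVec, projPerp, Matrix.mul_sub, Matrix.mul_one, hPNA,
      Matrix.sub_mulVec, hPMD, Matrix.sub_mulVec, Matrix.one_mulVec]
  -- (ii)
  have hii : D ⬝ᵥ (projPerp NA *ᵥ W) = 0 := by
    calc D ⬝ᵥ (projPerp NA *ᵥ W)
        = (projPerp NA *ᵥ D) ⬝ᵥ W := dot_symm (projPerp_symm NA) D W
      _ = (proj M *ᵥ (projPerp NA *ᵥ D)) ⬝ᵥ W := by rw [hclaim]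
      _ = (projPerp NA *ᵥ D) ⬝ᵥ (proj M *ᵥ W) := (dot_symm (proj_symm M) _ W).symm
      _ = (projPerp NA *ᵥ D) ⬝ᵥ What := by rw [hWhat]
      _ = D ⬝ᵥ (projPerp NA *ᵥ What) := (dot_symm (projPerp_symm NA) D What).symm
      _ = 0 := by rw [hWhat0]; simp
  refine ⟨hi, hii, ?_⟩
  -- (iii)
  have hY : projPerp NA *ᵥ Y =
      β • (projPerp NA *ᵥ D) + γ • (projPerp NA *ᵥ W) + projPerp NA *ᵥ ε := by
    rw [hmodel]
    simp only [Matrix.mulVec_add, Matrix.mulVec_smul, mulVec_mulVec, hi, Matrix.zero_mulVec,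
      add_zero, zero_add]
  have hDY : D ⬝ᵥ (projPerp NA *ᵥ Y) =
      β * (D ⬝ᵥ (projPerp NA *ᵥ D)) + D ⬝ᵥ (projPerp NA *ᵥ ε) := by
    rw [hY]
    simp [dotProduct_add, hii, mul_comm]
  rw [hDY, add_div, mul_div_assoc, div_self hden, mul_one]
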